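/- arXiv:math/0412254 — 3 statements merged into one kernel-verified Lean document; each statement's English description precedes it below -/
import Mathlib

section
/- Let (X, μ) be a standard Borel space with an atomless Borel probability measure μ, and let Φ be a finite family of partial isomorphisms of (X, μ) whose induced extended metric d_Φ is ergodic. Then the metric-measure space (X, d_Φ, μ) is concentrated if and only if there is no nontrivial asymptotically invariant sequence of Borel subsets of X for Φ. -/
open MeasureTheory Filter Set
open scoped ENNReal

/-- A partial isomorphism of a standard Borel space `X`: a Borel bijection between
two Borel subsets `dom` and `ran` of `X`, with Borel inverse. -/
structure PartialIso (X : Type*) [MeasurableSpace X] where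
  dom : Set X
  ran : Set X
  toFun : X → X
  invFun : X → X
  measurableSet_dom : MeasurableSet dom
  measurableSet_ran : MeasurableSet ran
  measurable_toFun : Measurable toFun
  measurable_invFun : Measurable invFun
  mapsTo : Set.MapsTo toFun dom ran
  mapsTo_inv : Set.MapsTo invFun ran dom
  left_inv : ∀ x ∈ dom, invFun (toFun x) = x
  right_inv : ∀ y ∈ ran, toFun (invFun y) = y

namespace PartialIso

variable {X : Type*} [MeasurableSpace X]

/-- The identity as a partial isomorphism. -/
def refl (X : Type*) [MeasurableSpace X] : PartialIso X :=
  ⟨Set.univ, Set.univ, id, id, MeasurableSet.univ, MeasurableSet.univ,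
   measurable_id, measurable_id, Set.mapsTo_univ _ _, Set.mapsTo_univ _ _,
   fun _ _ => rfl, fun _ _ => rfl⟩

/-- The inverse of a partial isomorphism. -/
def symm (f : PartialIso X) : PartialIso X :=
  ⟨f.ran, f.dom, f.invFun, f.toFun, f.measurableSet_ran, f.measurableSet_dom,
   f.measurable_invFun, f.measurable_toFun, f.mapsTo_inv, f.mapsTo,
   f.right_inv, f.left_inv⟩

/-- Composition (first `f`, then `g`) of partial isomorphisms, on its natural domain. -/
def trans (f g : PartialIso X) : PartialIso X where
  dom := f.dom ∩ f.toFun ⁻¹' g.dom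
  ran := g.ran ∩ g.invFun ⁻¹' f.ran
  toFun := g.toFun ∘ f.toFun
  invFun := f.invFun ∘ g.invFun
  measurableSet_dom := f.measurableSet_dom.inter (f.measurable_toFun g.measurableSet_dom)
  measurableSet_ran := g.measurableSet_ran.inter (g.measurable_invFun f.measurableSet_ran)
  measurable_toFun := g.measurable_toFun.comp f.measurable_toFun
  measurable_invFun := f.measurable_invFun.comp g.measurable_invFun
  mapsTo := by
    rintro x ⟨hx1, hx2⟩
    refine ⟨g.mapsTo hx2, ?_⟩
    show g.invFun (g.toFun (f.toFun x)) ∈ f.ran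
    rw [g.left_inv _ hx2]
    exact f.mapsTo hx1
  mapsTo_inv := by
    rintro y ⟨hy1, hy2⟩
    refine ⟨f.mapsTo_inv hy2, ?_⟩
    show f.toFun (f.invFun (g.invFun y)) ∈ g.dom
    rw [f.right_inv _ hy2]
    exact g.mapsTo_inv hy1
  left_inv := by
    rintro x ⟨hx1, hx2⟩
    show f.invFun (g.invFun (g.toFun (f.toFun x))) = x
    rw [g.left_inv _ hx2, f.left_inv _ hx1]
  right_inv := by
    rintro y ⟨hy1, hy2⟩
    show g.toFun (f.toFun (f.invFun (g.invFun y))) = y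
    rw [f.right_inv _ hy2, g.right_inv _ hy1]

/-- A partial isomorphism is nonsingular for `μ` (is a partial isomorphism of `(X, μ)`)
if it maps null sets inside its domain exactly to null sets. -/
def Nonsingular (μ : Measure X) (f : PartialIso X) : Prop :=
  ∀ A ⊆ f.dom, MeasurableSet A → (μ A = 0 ↔ μ (f.toFun '' A) = 0)

/-- The graph of the partial isomorphism `f` is contained in the relation `R`. -/
def IsInnerOf (f : PartialIso X) (R : Set (X × X)) : Prop :=
  ∀ x ∈ f.dom, (x, f.toFun x) ∈ R

end PartialIso

variable {X : Type*} [MeasurableSpace X]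

/-- `IsWord Φ m k` : `m` is a `Φ`-word of length `k`, i.e. a composition of `k` elements
of `Φ` and their inverses (on its natural domain). -/
def IsWord (Φ : Set (PartialIso X)) (m : PartialIso X) (k : ℕ) : Prop :=
  ∃ l : List (PartialIso X), l.length = k ∧
    (∀ φ ∈ l, φ ∈ Φ ∨ ∃ ψ ∈ Φ, φ = ψ.symm) ∧
    m = l.foldl PartialIso.trans (PartialIso.refl X)

/-- `wordDistLE Φ μ A B r` : the essential distance `d_Φ(A, B)` is at most `r`, i.e. the
set of points of `A` sent into `B` by some `Φ`-word of length at most `r` has positive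
measure. -/
def wordDistLE (Φ : Set (PartialIso X)) (μ : Measure X) (A B : Set X) (r : ℕ) : Prop :=
  0 < μ {x ∈ A | ∃ m k, IsWord Φ m k ∧ k ≤ r ∧ x ∈ m.dom ∧ m.toFun x ∈ B}

/-- The metric-measure space `(X, d_Φ, μ)` is concentrated. -/
def Concentrated (Φ : Set (PartialIso X)) (μ : Measure X) : Prop :=
  ∀ δ : ℝ≥0∞, 0 < δ → ∃ r : ℕ, ∀ A B : Set X, MeasurableSet A → MeasurableSet B →
    δ ≤ μ A → δ ≤ μ B → wordDistLE Φ μ A B r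

/-- The metric `d_Φ` is ergodic relative to `μ` : any two sets of positive measure are at
finite essential distance. -/
def MetricErgodic (Φ : Set (PartialIso X)) (μ : Measure X) : Prop :=
  ∀ A B : Set X, MeasurableSet A → MeasurableSet B → 0 < μ A → 0 < μ B →
    ∃ r : ℕ, wordDistLE Φ μ A B r

/-- A sequence of Borel sets is asymptotically invariant for the family `Φ`. -/
def AsympInvariant (Φ : Set (PartialIso X)) (μ : Measure X) (A : ℕ → Set X) : Prop :=
  ∀ m k, IsWord Φ m k →
    Tendsto (fun n => μ (m.toFun '' (A n ∩ m.dom) \ A n)) atTop (nhds 0)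

/-- A sequence of Borel sets is nontrivial: measures uniformly bounded away from `0` and `1`. -/
def NontrivialSeq (μ : Measure X) (A : ℕ → Set X) : Prop :=
  ∃ δ : ℝ≥0∞, 0 < δ ∧ ∀ n, δ ≤ μ (A n) ∧ μ (A n) ≤ 1 - δ

/-- A countable Borel equivalence relation on `X`. -/
def IsCountableBorelER (R : Set (X × X)) : Prop :=
  MeasurableSet R ∧ Equivalence (fun x y => (x, y) ∈ R) ∧ ∀ x, {y | (x, y) ∈ R}.Countable

/-- `μ` is quasi-invariant for `R` : partial isomorphisms of `R` map null sets to null sets. -/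
def QuasiInvariant (μ : Measure X) (R : Set (X × X)) : Prop :=
  ∀ f : PartialIso X, f.IsInnerOf R → ∀ N ⊆ f.dom, MeasurableSet N → μ N = 0 →
    μ (f.toFun '' N) = 0

/-- `μ` is invariant for `R` : partial isomorphisms of `R` preserve the measure. -/
def InvariantMeasure (μ : Measure X) (R : Set (X × X)) : Prop :=
  ∀ f : PartialIso X, f.IsInnerOf R → ∀ A ⊆ f.dom, MeasurableSet A →
    μ (f.toFun '' A) = μ A

/-- `R` is ergodic for `μ` : every Borel saturated set is null or conull. -/
def ErgodicRel (μ : Measure X) (R : Set (X × X)) : Prop :=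
  ∀ A : Set X, MeasurableSet A → (∀ x ∈ A, ∀ y, (x, y) ∈ R → y ∈ A) →
    μ A = 0 ∨ μ Aᶜ = 0

/-- `Φ` is a graphing of `R` : a family of partial isomorphisms of `R` whose words connect
almost every pair of equivalent points. -/
def IsGraphing (Φ : Set (PartialIso X)) (μ : Measure X) (R : Set (X × X)) : Prop :=
  (∀ φ ∈ Φ, φ.IsInnerOf R) ∧
  ∀ᵐ x ∂μ, ∀ y, (x, y) ∈ R → ∃ m k, IsWord Φ m k ∧ x ∈ m.dom ∧ m.toFun x = y

/-- A sequence of Borel sets is asymptotically invariant for the relation `R`. -/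
def AsympInvariantRel (μ : Measure X) (R : Set (X × X)) (A : ℕ → Set X) : Prop :=
  ∀ f : PartialIso X, f.IsInnerOf R →
    Tendsto (fun n => μ (f.toFun '' (A n ∩ f.dom) \ A n)) atTop (nhds 0)

/-- `R` is strongly ergodic : every asymptotically invariant sequence is trivial. -/
def StronglyErgodic (μ : Measure X) (R : Set (X × X)) : Prop :=
  ¬ ∃ A : ℕ → Set X, (∀ n, MeasurableSet (A n)) ∧ AsympInvariantRel μ R A ∧
    NontrivialSeq μ A

/-- The boundary `∂_Φ A` of a set `A` with respect to the family `Φ`. -/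
def bdry (Φ : Set (PartialIso X)) (A : Set X) : Set X :=
  (⋃ φ ∈ Φ, φ.toFun '' (A ∩ φ.dom) ∪ φ.invFun '' (A ∩ φ.ran)) \ A

/-- A vanishing Følner sequence for the family `Φ`. -/
def VanishingFolner (Φ : Set (PartialIso X)) (μ : Measure X) (A : ℕ → Set X) : Prop :=
  (∀ n, MeasurableSet (A n)) ∧ (∀ n, 0 < μ (A n)) ∧
  Tendsto (fun n => μ (A n)) atTop (nhds 0) ∧
  Tendsto (fun n => μ (bdry Φ (A n)) / μ (A n)) atTop (nhds 0)

/-- The equivalence relation generated by the family `Φ` : `(x, y) ∈ RGen Φ` iff `y = m x`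
for some `Φ`-word `m`. -/
def RGen (Φ : Set (PartialIso X)) : Set (X × X) :=
  {p | ∃ m k, IsWord Φ m k ∧ p.1 ∈ m.dom ∧ m.toFun p.1 = p.2}

/-! ### Auxiliary machinery -/

section Aux

namespace PartialIso

variable {X : Type*} [MeasurableSpace X]

lemma ext' {f g : PartialIso X} (h1 : f.dom = g.dom) (h2 : f.ran = g.ran)
    (h3 : f.toFun = g.toFun) (h4 : f.invFun = g.invFun) : f = g := by
  cases f; cases g
  cases h1; cases h2; cases h3; cases h4
  rfl

lemma refl_trans (f : PartialIso X) : (refl X).trans f = f := by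
  apply ext' <;> simp [trans, refl]

lemma trans_refl (f : PartialIso X) : f.trans (refl X) = f := by
  apply ext' <;> simp [trans, refl]

lemma trans_assoc (f g h : PartialIso X) :
    (f.trans g).trans h = f.trans (g.trans h) := by
  apply ext' <;>
    simp [trans, Set.preimage_comp, Set.preimage_inter, Set.inter_assoc, Function.comp_assoc]

lemma symm_trans (f g : PartialIso X) : (f.trans g).symm = g.symm.trans f.symm := rfl

lemma symm_symm (f : PartialIso X) : f.symm.symm = f := rfl

lemma symm_refl : (refl X).symm = refl X := rfl

end PartialIso

variable {X : Type*} [MeasurableSpace X]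

/-- The word associated to a list of partial isomorphisms. -/
def WordOf (l : List (PartialIso X)) : PartialIso X :=
  l.foldl PartialIso.trans (PartialIso.refl X)

lemma foldl_trans_eq (l : List (PartialIso X)) (e : PartialIso X) :
    l.foldl PartialIso.trans e = e.trans (WordOf l) := by
  induction l generalizing e with
  | nil => simp [WordOf, PartialIso.trans_refl]
  | cons a t ih =>
      rw [List.foldl_cons, ih (e.trans a),
        show WordOf (a :: t) = List.foldl PartialIso.trans ((PartialIso.refl X).trans a) t
          from rfl,
        ih, PartialIso.refl_trans, PartialIso.trans_assoc]

lemma WordOf_cons (a : PartialIso X) (l : List (PartialIso X)) :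
    WordOf (a :: l) = a.trans (WordOf l) := by
  rw [show WordOf (a :: l) = List.foldl PartialIso.trans ((PartialIso.refl X).trans a) l
      from rfl,
    foldl_trans_eq, PartialIso.refl_trans]

lemma WordOf_singleton (a : PartialIso X) : WordOf [a] = a := by
  rw [show WordOf [a] = (PartialIso.refl X).trans a from rfl, PartialIso.refl_trans]

lemma WordOf_append (l1 l2 : List (PartialIso X)) :
    WordOf (l1 ++ l2) = (WordOf l1).trans (WordOf l2) := by
  rw [WordOf, List.foldl_append, foldl_trans_eq]; rfl

lemma WordOf_reverse_symm (l : List (PartialIso X)) :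
    WordOf (l.reverse.map PartialIso.symm) = (WordOf l).symm := by
  induction l with
  | nil => rfl
  | cons a t ih =>
      rw [List.reverse_cons, List.map_append, WordOf_append, ih, List.map_singleton,
        WordOf_singleton, WordOf_cons, PartialIso.symm_trans]

/-- Lists that generate `Φ`-words of length at most `r`. -/
def WordLists (Φ : Set (PartialIso X)) (r : ℕ) : Set (List (PartialIso X)) :=
  {l | l.length ≤ r ∧ ∀ φ ∈ l, φ ∈ Φ ∨ ∃ ψ ∈ Φ, φ = ψ.symm}

lemma isWord_wordOf {Φ : Set (PartialIso X)} {l : List (PartialIso X)}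
    (hl : ∀ φ ∈ l, φ ∈ Φ ∨ ∃ ψ ∈ Φ, φ = ψ.symm) : IsWord Φ (WordOf l) l.length :=
  ⟨l, rfl, hl, rfl⟩

lemma IsWord.symm {Φ : Set (PartialIso X)} {m : PartialIso X} {k : ℕ}
    (h : IsWord Φ m k) : IsWord Φ m.symm k := by
  obtain ⟨l, hlen, hmem, rfl⟩ := h
  refine ⟨l.reverse.map PartialIso.symm, by simp [hlen], ?_, (WordOf_reverse_symm l).symm⟩
  intro φ hφ
  simp only [List.mem_map, List.mem_reverse] at hφ
  obtain ⟨ψ, hψ, rfl⟩ := hφ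
  rcases hmem ψ hψ with h1 | ⟨χ, hχ, rfl⟩
  · exact Or.inr ⟨ψ, h1, rfl⟩
  · exact Or.inl (by rw [PartialIso.symm_symm]; exact hχ)

lemma wordLists_finite {Φ : Set (PartialIso X)} (hfin : Φ.Finite) (r : ℕ) :
    (WordLists Φ r).Finite := by
  induction r with
  | zero =>
      refine (Set.finite_singleton ([] : List (PartialIso X))).subset ?_
      rintro l ⟨hlen, -⟩
      simpa using List.length_eq_zero_iff.1 (Nat.le_zero.1 hlen)
  | succ r ih =>
      refine ((((hfin.union (hfin.image PartialIso.symm)).image2 List.cons ih).insert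
        ([] : List (PartialIso X)))).subset ?_
      rintro l ⟨hlen, hmem⟩
      cases l with
      | nil => exact Set.mem_insert _ _
      | cons a t =>
          refine Set.mem_insert_of_mem _ (Set.mem_image2_of_mem ?_ ?_)
          · rcases hmem a List.mem_cons_self with h | ⟨ψ, hψ, rfl⟩
            · exact Or.inl h
            · exact Or.inr ⟨ψ, hψ, rfl⟩
          · exact ⟨Nat.le_of_succ_le_succ hlen, fun φ hφ => hmem φ (List.mem_cons_of_mem _ hφ)⟩

/-- The `r`-neighborhood of `T` via `Φ`-words. -/
def nbhd (Φ : Set (PartialIso X)) (r : ℕ) (T : Set X) : Set X :=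
  {x | ∃ m k, IsWord Φ m k ∧ k ≤ r ∧ x ∈ m.dom ∧ m.toFun x ∈ T}

lemma subset_nbhd {Φ : Set (PartialIso X)} {r : ℕ} {T : Set X} : T ⊆ nbhd Φ r T := by
  intro x hx
  exact ⟨PartialIso.refl X, 0, ⟨[], rfl, by simp, rfl⟩, Nat.zero_le r, Set.mem_univ x, hx⟩

lemma nbhd_mono {Φ : Set (PartialIso X)} {r r' : ℕ} {T : Set X} (h : r ≤ r') :
    nbhd Φ r T ⊆ nbhd Φ r' T := by
  rintro x ⟨m, k, hw, hk, hd, ht⟩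
  exact ⟨m, k, hw, hk.trans h, hd, ht⟩

lemma nbhd_eq_biUnion (Φ : Set (PartialIso X)) (r : ℕ) (T : Set X) :
    nbhd Φ r T = ⋃ l ∈ WordLists Φ r, ((WordOf l).dom ∩ (WordOf l).toFun ⁻¹' T) := by
  ext x
  simp only [Set.mem_iUnion, Set.mem_inter_iff, Set.mem_preimage, exists_prop]
  constructor
  · rintro ⟨m, k, ⟨l, hlen, hmem, rfl⟩, hk, hd, ht⟩
    exact ⟨l, ⟨hlen ▸ hk, hmem⟩, hd, ht⟩
  · rintro ⟨l, ⟨hlen, hmem⟩, hd, ht⟩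
    exact ⟨WordOf l, l.length, isWord_wordOf hmem, hlen, hd, ht⟩

lemma measurableSet_nbhd {Φ : Set (PartialIso X)} (hfin : Φ.Finite) (r : ℕ)
    {T : Set X} (hT : MeasurableSet T) : MeasurableSet (nbhd Φ r T) := by
  rw [nbhd_eq_biUnion]
  exact (wordLists_finite hfin r).measurableSet_biUnion fun l _ =>
    (WordOf l).measurableSet_dom.inter ((WordOf l).measurable_toFun hT)

lemma nbhd_image {Φ : Set (PartialIso X)} {m : PartialIso X} {k j : ℕ} {T : Set X}
    (hw : IsWord Φ m k) {x : X} (hx : x ∈ m.dom) (hnb : x ∈ nbhd Φ j T) :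
    m.toFun x ∈ nbhd Φ (j + k) T := by
  obtain ⟨w, kw, ⟨lw, hlenw, hmemw, rfl⟩, hkw, hdw, htw⟩ := hnb
  obtain ⟨lm, hlenm, hmemm, rfl⟩ := hw
  set lm' := lm.reverse.map PartialIso.symm with hlm'
  have hW : WordOf lm' = (WordOf lm).symm := WordOf_reverse_symm lm
  have hmem' : ∀ φ ∈ lm', φ ∈ Φ ∨ ∃ ψ ∈ Φ, φ = ψ.symm := by
    intro φ hφ
    simp only [hlm', List.mem_map, List.mem_reverse] at hφ
    obtain ⟨ψ, hψ, rfl⟩ := hφ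
    rcases hmemm ψ hψ with h1 | ⟨χ, hχ, rfl⟩
    · exact Or.inr ⟨ψ, h1, rfl⟩
    · exact Or.inl (by rw [PartialIso.symm_symm]; exact hχ)
  have hx' : (WordOf lm).toFun x ∈ (WordOf lm).ran := (WordOf lm).mapsTo hx
  have hinv : (WordOf lm).invFun ((WordOf lm).toFun x) = x := (WordOf lm).left_inv x hx
  refine ⟨WordOf (lm' ++ lw), (lm' ++ lw).length, isWord_wordOf ?_, ?_, ?_, ?_⟩
  · intro φ hφ
    rcases List.mem_append.1 hφ with h | h
    · exact hmem' φ h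
    · exact hmemw φ h
  · simp only [List.length_append, hlm', List.length_map, List.length_reverse, hlenm, hlenw]
    omega
  · rw [WordOf_append, hW]
    refine ⟨hx', ?_⟩
    show (WordOf lm).invFun ((WordOf lm).toFun x) ∈ (WordOf lw).dom
    rw [hinv]
    exact hdw
  · rw [WordOf_append, hW]
    show (WordOf lw).toFun ((WordOf lm).invFun ((WordOf lm).toFun x)) ∈ T
    rw [hinv]
    exact htw

section Nonsingular

set_option linter.unusedSectionVars false

variable [StandardBorelSpace X] {μ : Measure X}

lemma PartialIso.injOn_dom (f : PartialIso X) : Set.InjOn f.toFun f.dom := by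
  intro x hx y hy hxy
  rw [← f.left_inv x hx, ← f.left_inv y hy, hxy]

lemma PartialIso.injOn_ran (f : PartialIso X) : Set.InjOn f.invFun f.ran := by
  intro x hx y hy hxy
  rw [← f.right_inv x hx, ← f.right_inv y hy, hxy]

lemma PartialIso.Nonsingular.symm' {f : PartialIso X} (hf : f.Nonsingular μ) :
    f.symm.Nonsingular μ := by
  intro A hA hAm
  have hB : MeasurableSet (f.invFun '' A) :=
    hAm.image_of_measurable_injOn f.measurable_invFun (f.injOn_ran.mono hA)
  have hBsub : f.invFun '' A ⊆ f.dom := by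
    rintro y ⟨x, hx, rfl⟩
    exact f.mapsTo_inv (hA hx)
  have himg : f.toFun '' (f.invFun '' A) = A := by
    ext y
    constructor
    · rintro ⟨z, ⟨x, hx, rfl⟩, rfl⟩
      rwa [f.right_inv x (hA hx)]
    · intro hy
      exact ⟨f.invFun y, ⟨y, hy, rfl⟩, f.right_inv y (hA hy)⟩
  have := hf (f.invFun '' A) hBsub hB
  rw [himg] at this
  exact this.symm

lemma PartialIso.Nonsingular.trans' {f g : PartialIso X} (hf : f.Nonsingular μ)
    (hg : g.Nonsingular μ) : (f.trans g).Nonsingular μ := by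
  intro A hA hAm
  have hAdom : A ⊆ f.dom := hA.trans Set.inter_subset_left
  have hB : MeasurableSet (f.toFun '' A) :=
    hAm.image_of_measurable_injOn f.measurable_toFun (f.injOn_dom.mono hAdom)
  have hBsub : f.toFun '' A ⊆ g.dom := by
    rintro y ⟨x, hx, rfl⟩
    exact (hA hx).2
  have : (f.trans g).toFun '' A = g.toFun '' (f.toFun '' A) := by
    rw [← Set.image_comp]; rfl
  rw [this]
  exact (hf A hAdom hAm).trans (hg _ hBsub hB)

lemma PartialIso.nonsingular_refl : (PartialIso.refl X).Nonsingular μ := by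
  intro A _ _
  have : (PartialIso.refl X).toFun '' A = A := Set.image_id A
  rw [this]

lemma nonsingular_wordOf {l : List (PartialIso X)}
    (h : ∀ φ ∈ l, φ.Nonsingular μ) : (WordOf l).Nonsingular μ := by
  induction l with
  | nil => exact PartialIso.nonsingular_refl
  | cons a t ih =>
      rw [WordOf_cons]
      exact (h a List.mem_cons_self).trans'
        (ih fun φ hφ => h φ (List.mem_cons_of_mem _ hφ))

lemma IsWord.null_preimage {Φ : Set (PartialIso X)} {m : PartialIso X} {k : ℕ}
    (hw : IsWord Φ m k) (hns : ∀ φ ∈ Φ, φ.Nonsingular μ) {Z : Set X}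
    (hZ : MeasurableSet Z) (hZ0 : μ Z = 0) : μ (m.dom ∩ m.toFun ⁻¹' Z) = 0 := by
  obtain ⟨l, -, hmem, rfl⟩ := hw
  have hm : (WordOf l).Nonsingular μ := by
    refine nonsingular_wordOf fun φ hφ => ?_
    rcases hmem φ hφ with h | ⟨ψ, hψ, rfl⟩
    · exact hns φ h
    · exact (hns ψ hψ).symm'
  have hA : MeasurableSet ((WordOf l).dom ∩ (WordOf l).toFun ⁻¹' Z) :=
    (WordOf l).measurableSet_dom.inter ((WordOf l).measurable_toFun hZ)
  show μ ((WordOf l).dom ∩ (WordOf l).toFun ⁻¹' Z) = 0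
  rw [hm _ Set.inter_subset_left hA]
  refine measure_mono_null ?_ hZ0
  rintro y ⟨x, ⟨-, hx⟩, rfl⟩
  exact hx

end Nonsingular

end Aux

/-- For a finite family `Φ` of partial isomorphisms of `(X, μ)` whose induced
metric is ergodic, the metric-measure space `(X, d_Φ, μ)` is concentrated iff there is no
nontrivial asymptotically invariant sequence of Borel sets for `Φ`. -/
theorem stmt0 {X : Type*} [MeasurableSpace X] [StandardBorelSpace X]
    (μ : Measure X) [IsProbabilityMeasure μ] [NullSingletonClass μ]
    (Φ : Set (PartialIso X)) (hfin : Φ.Finite)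
    (hns : ∀ φ ∈ Φ, φ.Nonsingular μ)
    (herg : MetricErgodic Φ μ) :
    Concentrated Φ μ ↔
      ¬ ∃ A : ℕ → Set X, (∀ n, MeasurableSet (A n)) ∧
          AsympInvariant Φ μ A ∧ NontrivialSeq μ A := by
  classical
  constructor
  · -- Concentration implies no nontrivial asymptotically invariant sequence
    intro hconc
    rintro ⟨A, hAmeas, hAI, δ, hδpos, hδ⟩
    have hδ1 : δ ≤ 1 := le_trans (hδ 0).1 prob_le_one
    have hhalfpos : (0:ℝ≥0∞) < δ / 2 := ENNReal.div_pos hδpos.ne' (by norm_num)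
    obtain ⟨r, hr⟩ := hconc (δ / 2) hhalfpos
    have hS : (WordLists Φ r).Finite := wordLists_finite hfin r
    set N : ℕ → Set X := fun n => nbhd Φ r (A n) with hN
    have hNmeas : ∀ n, MeasurableSet (N n) := fun n => measurableSet_nbhd hfin r (hAmeas n)
    have hNc : ∀ n, μ (N n)ᶜ < δ / 2 := by
      intro n
      by_contra hcon
      push_neg at hcon
      have hw := hr (N n)ᶜ (A n) (hNmeas n).compl (hAmeas n) hcon
        (le_trans ENNReal.half_le_self (hδ n).1)
      have hempty : {x ∈ (N n)ᶜ |
          ∃ m k, IsWord Φ m k ∧ k ≤ r ∧ x ∈ m.dom ∧ m.toFun x ∈ A n} = (∅ : Set X) := by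
        ext x
        simp only [Set.mem_setOf_eq, Set.mem_empty_iff_false, iff_false, not_and]
        intro hxc hx
        exact hxc hx
      have hw' : (0:ℝ≥0∞) < μ (∅ : Set X) := by rw [← hempty]; exact hw
      simp at hw'
    set s : List (PartialIso X) → ℕ → Set X := fun l n =>
      (WordOf l).symm.toFun '' (A n ∩ (WordOf l).symm.dom) \ A n with hs
    have hsum : Tendsto (fun n => ∑ l ∈ hS.toFinset, μ (s l n)) atTop (nhds 0) := by
      have h0 : Tendsto (fun n => ∑ l ∈ hS.toFinset, μ (s l n)) atTop
          (nhds (∑ l ∈ hS.toFinset, 0)) := by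
        refine tendsto_finset_sum _ fun l hl => ?_
        exact hAI (WordOf l).symm l.length (isWord_wordOf (hS.mem_toFinset.1 hl).2).symm
      simpa using h0
    obtain ⟨n, hn⟩ := (hsum.eventually_lt_const hhalfpos).exists
    have hincl : N n \ A n ⊆ ⋃ l ∈ hS.toFinset, s l n := by
      rintro x ⟨hxN, hxA⟩
      obtain ⟨m, k, ⟨l, hlen, hmem, rfl⟩, hk, hd, ht⟩ := hxN
      refine Set.mem_biUnion (hS.mem_toFinset.2 ⟨hlen ▸ hk, hmem⟩) ?_
      exact ⟨⟨(WordOf l).toFun x, ⟨ht, (WordOf l).mapsTo hd⟩, (WordOf l).left_inv x hd⟩, hxA⟩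
    have hNA : μ (N n \ A n) < δ / 2 :=
      lt_of_le_of_lt (le_trans (measure_mono hincl) (measure_biUnion_finset_le _ _)) hn
    have hcover : (Set.univ : Set X) ⊆ A n ∪ ((N n \ A n) ∪ (N n)ᶜ) := by
      intro x _
      by_cases hx : x ∈ N n
      · by_cases hxa : x ∈ A n
        · exact Or.inl hxa
        · exact Or.inr (Or.inl ⟨hx, hxa⟩)
      · exact Or.inr (Or.inr hx)
    have h1 : (1:ℝ≥0∞) ≤ μ (A n) + (μ (N n \ A n) + μ (N n)ᶜ) := by
      calc (1:ℝ≥0∞) = μ Set.univ := measure_univ.symm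
        _ ≤ μ (A n ∪ ((N n \ A n) ∪ (N n)ᶜ)) := measure_mono hcover
        _ ≤ μ (A n) + μ ((N n \ A n) ∪ (N n)ᶜ) := measure_union_le _ _
        _ ≤ μ (A n) + (μ (N n \ A n) + μ (N n)ᶜ) := add_le_add_right (measure_union_le _ _) _
    have h2 : μ (A n) + (μ (N n \ A n) + μ (N n)ᶜ) < (1 - δ) + δ := by
      refine ENNReal.add_lt_add_of_le_of_lt (measure_ne_top μ _) (hδ n).2 ?_
      calc μ (N n \ A n) + μ (N n)ᶜ < δ / 2 + δ / 2 := ENNReal.add_lt_add hNA (hNc n)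
        _ = δ := ENNReal.add_halves δ
    rw [tsub_add_cancel_of_le hδ1] at h2
    exact absurd (lt_of_le_of_lt h1 h2) (lt_irrefl _)
  · -- No nontrivial asymptotically invariant sequence implies concentration
    intro hno
    by_contra hnc
    apply hno
    simp only [Concentrated] at hnc
    push_neg at hnc
    obtain ⟨δ, hδpos, hbad⟩ := hnc
    choose Ar Br hAm hBm hAμ hBμ hfar using hbad
    have hnull : ∀ r : ℕ, μ (nbhd Φ r (Ar r) ∩ Br r) = 0 := by
      intro r
      have hZ0 : μ (Ar r ∩ nbhd Φ r (Br r)) = 0 := by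
        have hthis := hfar r
        simp only [wordDistLE, not_lt, nonpos_iff_eq_zero] at hthis
        have heq : {x ∈ Ar r |
            ∃ m k, IsWord Φ m k ∧ k ≤ r ∧ x ∈ m.dom ∧ m.toFun x ∈ Br r}
            = Ar r ∩ nbhd Φ r (Br r) := rfl
        rwa [heq] at hthis
      have hZm : MeasurableSet (Ar r ∩ nbhd Φ r (Br r)) :=
        (hAm r).inter (measurableSet_nbhd hfin r (hBm r))
      have hsub : nbhd Φ r (Ar r) ∩ Br r ⊆
          ⋃ l ∈ WordLists Φ r,
            ((WordOf l).dom ∩ (WordOf l).toFun ⁻¹' (Ar r ∩ nbhd Φ r (Br r))) := by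
        rintro x ⟨hxF, hxB⟩
        obtain ⟨m, k, ⟨l, hlen, hmem, rfl⟩, hk, hd, ht⟩ := hxF
        refine Set.mem_biUnion (show l ∈ WordLists Φ r from ⟨hlen ▸ hk, hmem⟩) ?_
        refine ⟨hd, ht, ?_⟩
        refine ⟨(WordOf l).symm, l.length, (isWord_wordOf hmem).symm, hlen ▸ hk,
          (WordOf l).mapsTo hd, ?_⟩
        show (WordOf l).invFun ((WordOf l).toFun x) ∈ Br r
        rw [(WordOf l).left_inv x hd]
        exact hxB
      refine measure_mono_null hsub ?_
      rw [measure_biUnion_null_iff (wordLists_finite hfin r).countable]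
      intro l hl
      exact (isWord_wordOf hl.2).null_preimage hns hZm hZ0
    have key : ∀ n : ℕ, ∃ i, i < n + 1 ∧
        μ (nbhd Φ ((i+1)*(n+1)) (Ar ((n+1)*(n+1))) \ nbhd Φ (i*(n+1)) (Ar ((n+1)*(n+1))))
          ≤ 2 * (((n+1 : ℕ) : ℝ≥0∞))⁻¹ := by
      intro n
      by_contra hcon
      push_neg at hcon
      set T := Ar ((n+1) * (n+1)) with hT
      set G : ℕ → Set X := fun i => nbhd Φ ((i+1)*(n+1)) T \ nbhd Φ (i*(n+1)) T with hG
      have hGmeas : ∀ i, MeasurableSet (G i) := fun i =>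
        (measurableSet_nbhd hfin _ (hAm _)).diff (measurableSet_nbhd hfin _ (hAm _))
      have hdisj : (↑(Finset.range (n+1)) : Set ℕ).PairwiseDisjoint G := by
        have haux : ∀ i j : ℕ, i < j → Disjoint (G i) (G j) := by
          intro i j hij
          refine Set.disjoint_left.2 ?_
          rintro x ⟨hx1, -⟩ ⟨-, hx2⟩
          exact hx2 (nbhd_mono (Nat.mul_le_mul_right (n+1) hij) hx1)
        intro i _ j _ hij
        rcases lt_or_gt_of_ne hij with h | h
        · exact haux i j h
        · exact (haux j i h).symm
      have hsum : ∑ i ∈ Finset.range (n+1), μ (G i) ≤ 1 := by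
        rw [← measure_biUnion_finset hdisj (fun i _ => hGmeas i)]
        exact prob_le_one
      have hlt : (2:ℝ≥0∞) ≤ ∑ i ∈ Finset.range (n+1), μ (G i) := by
        have hstep := Finset.sum_le_sum
          (f := fun _ : ℕ => 2 * (((n+1 : ℕ) : ℝ≥0∞))⁻¹) (g := fun i => μ (G i))
          (s := Finset.range (n+1))
          (fun i hi => le_of_lt (hcon i (Finset.mem_range.1 hi)))
        have hconst : ((n+1 : ℕ) : ℝ≥0∞) * (2 * (((n+1 : ℕ) : ℝ≥0∞))⁻¹) = 2 := by
          rw [mul_comm (2:ℝ≥0∞), ← mul_assoc,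
            ENNReal.mul_inv_cancel (by exact_mod_cast Nat.succ_ne_zero n)
              (ENNReal.natCast_ne_top (n+1)), one_mul]
        rwa [Finset.sum_const, Finset.card_range, nsmul_eq_mul, hconst] at hstep
      have : (2:ℝ≥0∞) ≤ 1 := le_trans hlt hsum
      norm_num at this
    choose i hi hile using key
    set C : ℕ → Set X := fun n => nbhd Φ (i n * (n+1)) (Ar ((n+1)*(n+1))) with hC
    refine ⟨C, fun n => measurableSet_nbhd hfin _ (hAm _), ?_, δ, hδpos, fun n => ⟨?_, ?_⟩⟩
    · -- asymptotic invariance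
      intro m k hw
      have hb : Tendsto (fun n : ℕ => 2 * (((n+1 : ℕ) : ℝ≥0∞))⁻¹) atTop (nhds 0) := by
        have h1 : Tendsto (fun n : ℕ => (((n+1 : ℕ) : ℝ≥0∞))⁻¹) atTop (nhds 0) :=
          ENNReal.tendsto_inv_nat_nhds_zero.comp (Filter.tendsto_add_atTop_nat 1)
        simpa using ENNReal.Tendsto.const_mul h1 (Or.inr ENNReal.ofNat_ne_top)
      refine tendsto_of_tendsto_of_tendsto_of_le_of_le' tendsto_const_nhds hb
        (Filter.Eventually.of_forall fun n => zero_le) ?_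
      filter_upwards [Filter.eventually_ge_atTop k] with n hk
      refine le_trans (measure_mono ?_) (hile n)
      rintro y ⟨⟨x, ⟨hxC, hxd⟩, rfl⟩, hyC⟩
      refine ⟨?_, hyC⟩
      have himg := nbhd_image hw hxd hxC
      have hle : i n * (n+1) + k ≤ (i n + 1) * (n+1) := by
        rw [Nat.add_mul, Nat.one_mul]
        exact Nat.add_le_add_left (hk.trans (Nat.le_succ n)) _
      exact nbhd_mono hle himg
    · -- lower bound
      exact le_trans (hAμ _) (measure_mono subset_nbhd)
    · -- upper bound
      have hmul : i n * (n+1) ≤ (n+1) * (n+1) :=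
        Nat.mul_le_mul_right (n+1) (le_of_lt (hi n))
      calc μ (C n) ≤ μ (nbhd Φ ((n+1)*(n+1)) (Ar ((n+1)*(n+1)))) :=
            measure_mono (nbhd_mono hmul)
        _ = μ (nbhd Φ ((n+1)*(n+1)) (Ar ((n+1)*(n+1))) ∩ Br ((n+1)*(n+1)))
            + μ (nbhd Φ ((n+1)*(n+1)) (Ar ((n+1)*(n+1))) \ Br ((n+1)*(n+1))) :=
          (measure_inter_add_diff _ (hBm _)).symm
        _ = μ (nbhd Φ ((n+1)*(n+1)) (Ar ((n+1)*(n+1))) \ Br ((n+1)*(n+1))) := by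
          rw [hnull, zero_add]
        _ ≤ μ (Br ((n+1)*(n+1)))ᶜ := measure_mono fun x hx => hx.2
        _ = 1 - μ (Br ((n+1)*(n+1))) := prob_compl_eq_one_sub (hBm _)
        _ ≤ 1 - δ := tsub_le_tsub_left (hBμ _) 1
end

section
/- Let (X, μ) be a standard Borel space with an atomless Borel probability measure μ, let Φ be a finite family of partial isomorphisms of (X, μ), and let (A_n) be an asymptotically invariant sequence for Φ with δ ≤ μ(A_n) ≤ 1 − δ for all n, for some δ > 0. Then for every r ∈ ℕ there exist an index N and a Borel set C ⊆ X with μ(C) ≥ δ/2 such that d_Φ(A_N, C) > r, i.e. the set of x ∈ A_N for which some Φ-word m of length ≤ r satisfies x ∈ D_m and m(x) ∈ C is μ-null. -/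
open MeasureTheory Filter Set
open scoped ENNReal

variable {X : Type*} [MeasurableSpace X]

/-- Given a nontrivial asymptotically invariant sequence for a finite family `Φ`,
for every radius `r` there are an index `N` and a Borel set `C` of measure at least `δ/2`
with `d_Φ(A_N, C) > r`. -/
theorem stmt1 {X : Type*} [MeasurableSpace X] [StandardBorelSpace X]
    (μ : Measure X) [IsProbabilityMeasure μ] [NullSingletonClass μ]
    (Φ : Set (PartialIso X)) (hfin : Φ.Finite)
    (hns : ∀ φ ∈ Φ, φ.Nonsingular μ)
    (A : ℕ → Set X) (hA : ∀ n, MeasurableSet (A n))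
    (hAI : AsympInvariant Φ μ A)
    (δ : ℝ≥0∞) (hδ : 0 < δ) (hbound : ∀ n, δ ≤ μ (A n) ∧ μ (A n) ≤ 1 - δ) :
    ∀ r : ℕ, ∃ (N : ℕ) (C : Set X), MeasurableSet C ∧ δ / 2 ≤ μ C ∧
      μ {x ∈ A N | ∃ m k, IsWord Φ m k ∧ k ≤ r ∧ x ∈ m.dom ∧ m.toFun x ∈ C} = 0 := by

  intro r
  classical
  -- the finite family of generators and their inverses
  set Φ' : Set (PartialIso X) := Φ ∪ PartialIso.symm '' Φ with hΦ'
  have hΦ'fin : Φ'.Finite := hfin.union (hfin.image _)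
  -- the word associated to a list
  set w : List (PartialIso X) → PartialIso X :=
    fun l => l.foldl PartialIso.trans (PartialIso.refl X) with hw
  -- the set of relevant lists
  set S : Set (List (PartialIso X)) :=
    {l | l.length ≤ r ∧ ∀ φ ∈ l, φ ∈ Φ'} with hS
  have hSfin : S.Finite := by
    haveI : Finite ↥Φ' := hΦ'fin.to_subtype
    have h1 : {l : List ↥Φ' | l.length ≤ r}.Finite := List.finite_length_le _ r
    have h2 : S ⊆ (List.map (Subtype.val : ↥Φ' → PartialIso X)) '' {l | l.length ≤ r} := by
      rintro l ⟨hlen, hmem⟩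
      refine ⟨l.pmap (fun φ h => (⟨φ, h⟩ : ↥Φ')) hmem, ?_, ?_⟩
      · simpa using hlen
      · simp [List.map_pmap]
    exact (h1.image _).subset h2
  -- the error terms tend to 0
  have herr : Tendsto (fun n => ∑ l ∈ hSfin.toFinset,
      μ ((w l).toFun '' (A n ∩ (w l).dom) \ A n)) atTop (nhds 0) := by
    have key : ∀ l ∈ hSfin.toFinset, Tendsto
        (fun n => μ ((w l).toFun '' (A n ∩ (w l).dom) \ A n)) atTop (nhds 0) := by
      intro l hl
      have hlS : l ∈ S := hSfin.mem_toFinset.1 hl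
      have : IsWord Φ (w l) l.length := by
        refine ⟨l, rfl, fun φ hφ => ?_, rfl⟩
        rcases hlS.2 φ hφ with h | ⟨ψ, hψ, h⟩
        · exact Or.inl h
        · exact Or.inr ⟨ψ, hψ, h.symm⟩
      exact hAI _ _ this
    simpa using tendsto_finset_sum hSfin.toFinset key
  have hδ2 : 0 < δ / 2 := ENNReal.div_pos hδ.ne' (by norm_num)
  obtain ⟨N, hN⟩ : ∃ N, ∑ l ∈ hSfin.toFinset,
      μ ((w l).toFun '' (A N ∩ (w l).dom) \ A N) < δ / 2 :=
    ((tendsto_order.1 herr).2 (δ / 2) hδ2).exists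
  -- the "ball" around A N
  set B : Set X := A N ∪ ⋃ l ∈ hSfin.toFinset,
    ((w l).toFun '' (A N ∩ (w l).dom) \ A N) with hB
  have hδ1 : δ ≤ 1 := le_trans (hbound N).1 prob_le_one
  have hBle : μ B ≤ 1 - δ + δ / 2 := by
    calc μ B ≤ μ (A N) + μ (⋃ l ∈ hSfin.toFinset,
          ((w l).toFun '' (A N ∩ (w l).dom) \ A N)) := measure_union_le _ _
      _ ≤ μ (A N) + ∑ l ∈ hSfin.toFinset,
          μ ((w l).toFun '' (A N ∩ (w l).dom) \ A N) := by
          gcongr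
          exact measure_biUnion_finset_le _ _
      _ ≤ 1 - δ + δ / 2 := add_le_add (hbound N).2 hN.le
  refine ⟨N, (toMeasurable μ B)ᶜ, (measurableSet_toMeasurable μ B).compl, ?_, ?_⟩
  · rw [prob_compl_eq_one_sub (measurableSet_toMeasurable μ B)]
    refine ENNReal.le_sub_of_add_le_left (measure_ne_top μ _) ?_
    rw [measure_toMeasurable, add_comm]
    calc δ / 2 + μ B ≤ δ / 2 + (1 - δ + δ / 2) := add_le_add le_rfl hBle
      _ = 1 - δ + δ := by rw [add_comm (δ / 2), add_assoc, ENNReal.add_halves]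
      _ = 1 := tsub_add_cancel_of_le hδ1
  · refine measure_mono_null (fun x hx => ?_) (measure_empty (μ := μ))
    obtain ⟨hxA, m, k, ⟨l, hlen, hmem, hml⟩, hkr, hxdom, hxC⟩ := hx
    subst hml
    have hlS : l ∈ hSfin.toFinset := by
      refine hSfin.mem_toFinset.2 ⟨hlen ▸ hkr, fun φ hφ => ?_⟩
      rcases hmem φ hφ with h | ⟨ψ, hψ, h⟩
      · exact Or.inl h
      · exact Or.inr ⟨ψ, hψ, h ▸ rfl⟩
    have hxB : (w l).toFun x ∈ B := by
      by_cases hA' : (w l).toFun x ∈ A N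
      · exact Or.inl hA'
      · refine Or.inr (Set.mem_biUnion hlS ?_)
        exact ⟨⟨x, ⟨hxA, hxdom⟩, rfl⟩, hA'⟩
    exact hxC (subset_toMeasurable μ B hxB)
end

section
/- Let R be an ergodic countable Borel equivalence relation on a standard Borel space X with an atomless quasi-invariant Borel probability measure μ, and let Φ and Ψ be two finite graphings of R. Then the metric-measure space (X, d_Φ, μ) is concentrated if and only if (X, d_Ψ, μ) is concentrated. (Concentration of a uniformly locally finite quasi-periodic graph over an ergodic singular space of finite type does not depend on the chosen graph.) -/
open MeasureTheory Filter Set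
open scoped ENNReal

variable {X : Type*} [MeasurableSpace X]

section Aux

variable {X : Type*} [MeasurableSpace X]

lemma symm_inner {R : Set (X × X)} (hsymm : ∀ {x y : X}, (x, y) ∈ R → (y, x) ∈ R)
    {f : PartialIso X} (hf : f.IsInnerOf R) : f.symm.IsInnerOf R := by
  intro x hx
  have h1 : f.invFun x ∈ f.dom := f.mapsTo_inv hx
  have h2 := hf _ h1
  rw [f.right_inv x hx] at h2
  exact hsymm h2

lemma trans_inner {R : Set (X × X)}
    (htrans : ∀ {x y z : X}, (x, y) ∈ R → (y, z) ∈ R → (x, z) ∈ R)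
    {f g : PartialIso X} (hf : f.IsInnerOf R) (hg : g.IsInnerOf R) :
    (f.trans g).IsInnerOf R := by
  rintro x ⟨h1, h2⟩
  exact htrans (hf x h1) (hg _ h2)

lemma word_inner {R : Set (X × X)} {Φ : Set (PartialIso X)}
    (hΦ : ∀ φ ∈ Φ, φ.IsInnerOf R) (hR : Equivalence (fun x y => (x, y) ∈ R))
    {m : PartialIso X} {k : ℕ} (hm : IsWord Φ m k) : m.IsInnerOf R := by
  obtain ⟨l, -, hl, rfl⟩ := hm
  have base : (PartialIso.refl X).IsInnerOf R := fun x _ => hR.refl x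
  suffices H : ∀ l : List (PartialIso X), (∀ φ ∈ l, φ ∈ Φ ∨ ∃ ψ ∈ Φ, φ = ψ.symm) →
      ∀ acc : PartialIso X, acc.IsInnerOf R →
      (l.foldl PartialIso.trans acc).IsInnerOf R from H l hl _ base
  intro l
  induction l with
  | nil => exact fun _ _ h => h
  | cons a t ih =>
    intro hmem acc hacc
    have ha : a.IsInnerOf R := by
      rcases hmem a (List.mem_cons_self) with h | ⟨ψ, hψ, rfl⟩
      · exact hΦ a h
      · exact symm_inner (fun h => hR.symm h) (hΦ ψ hψ)
    exact ih (fun φ hφ => hmem φ (List.mem_cons_of_mem _ hφ)) _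
      (trans_inner (fun h1 h2 => hR.trans h1 h2) hacc ha)

lemma wordSet_finite {Φ : Set (PartialIso X)} (hΦ : Φ.Finite) (r : ℕ) :
    {m : PartialIso X | ∃ k ≤ r, IsWord Φ m k}.Finite := by
  classical
  set alph : Set (PartialIso X) := Φ ∪ PartialIso.symm '' Φ with halphdef
  have halph : alph.Finite := hΦ.union (hΦ.image _)
  have hsub : {m : PartialIso X | ∃ k ≤ r, IsWord Φ m k} ⊆
      (fun l : List (PartialIso X) => l.foldl PartialIso.trans (PartialIso.refl X)) ''
        {l | l.length ≤ r ∧ ∀ φ ∈ l, φ ∈ alph} := by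
    rintro m ⟨k, hk, l, hlen, hmem, rfl⟩
    refine ⟨l, ⟨le_of_eq_of_le hlen hk, fun φ hφ => ?_⟩, rfl⟩
    rcases hmem φ hφ with h | ⟨ψ, hψ, he⟩
    · exact Or.inl h
    · exact Or.inr ⟨ψ, hψ, he.symm⟩
  refine Set.Finite.subset (Set.Finite.image _ ?_) hsub
  have : Finite ↥alph := halph.to_subtype
  have hfin := (List.finite_length_le ↥alph r).image (List.map (Subtype.val))
  refine hfin.subset ?_
  rintro l ⟨hlen, hmem⟩
  refine ⟨l.attach.map (fun x => (⟨x.1, hmem x.1 x.2⟩ : ↥alph)),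
    by simp only [Set.mem_setOf_eq, List.length_map, List.length_attach]; exact hlen, ?_⟩
  rw [List.map_map]
  simp [Function.comp_def]

lemma eqset_meas [StandardBorelSpace X] {f g : X → X}
    (hf : Measurable f) (hg : Measurable g) : MeasurableSet {x | f x = g x} := by
  letI := upgradeStandardBorel X
  exact hf.stronglyMeasurable.measurableSet_eq_fun hg.stronglyMeasurable

end Aux

lemma conc_mono {X : Type*} [MeasurableSpace X] [StandardBorelSpace X]
    (μ : MeasureTheory.Measure X) [MeasureTheory.IsProbabilityMeasure μ]
    (R : Set (X × X)) (hR : IsCountableBorelER R)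
    (Φ Ψ : Set (PartialIso X)) (hΦfin : Φ.Finite) (hΨfin : Ψ.Finite)
    (hΦ : IsGraphing Φ μ R) (hΨ : IsGraphing Ψ μ R)
    (hc : Concentrated Φ μ) : Concentrated Ψ μ := by
  classical
  intro δ hδ
  set δ₀ : ℝ≥0∞ := min δ 1 with hδ₀def
  have hδ₀pos : 0 < δ₀ := lt_min hδ zero_lt_one
  have hδ₀top : δ₀ ≠ ∞ := ((min_le_right δ 1).trans_lt (by norm_num)).ne
  have hhalfpos : 0 < δ₀ / 2 := ENNReal.half_pos hδ₀pos.ne'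
  have hhalftop : δ₀ / 2 ≠ ∞ :=
    (ENNReal.div_lt_top hδ₀top (by norm_num)).ne
  obtain ⟨r, hr⟩ := hc (δ₀ / 2) hhalfpos
  set W : Set (PartialIso X) := {m | ∃ k ≤ r, IsWord Φ m k} with hWdef
  have hW : W.Finite := wordSet_finite hΦfin r
  set WΨ : ℕ → Set (PartialIso X) := fun K => {m' | ∃ k ≤ K, IsWord Ψ m' k} with hWΨdef
  have hWΨ : ∀ K, (WΨ K).Finite := fun K => wordSet_finite hΨfin K
  set S : PartialIso X → ℕ → Set X := fun m K =>
    m.dom ∩ ⋃ m' ∈ WΨ K, (m'.dom ∩ {x | m'.toFun x = m.toFun x}) with hSdef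
  have hSmeas : ∀ m K, MeasurableSet (S m K) := fun m K =>
    m.measurableSet_dom.inter ((hWΨ K).measurableSet_biUnion fun m' _ =>
      m'.measurableSet_dom.inter (eqset_meas m'.measurable_toFun m.measurable_toFun))
  have hSmono : ∀ m, Monotone (S m) := by
    intro m K K' hKK'
    refine Set.inter_subset_inter_right _ ?_
    refine Set.biUnion_subset_biUnion_left ?_
    rintro m' ⟨k, hk, hw⟩
    exact ⟨k, hk.trans hKK', hw⟩
  -- the null set where the Ψ-graphing fails
  set Z : Set X := {x | ¬ ∀ y, (x, y) ∈ R →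
      ∃ m k, IsWord Ψ m k ∧ x ∈ m.dom ∧ m.toFun x = y} with hZdef
  have hZ : μ Z = 0 := MeasureTheory.ae_iff.mp hΨ.2
  -- intersection of bad sets is null
  have hcap : ∀ m ∈ W, (⋂ K, (m.dom \ S m K)) ⊆ Z := by
    rintro m ⟨k, hk, hword⟩ x hx
    simp only [Set.mem_iInter, Set.mem_diff] at hx
    have hxdom : x ∈ m.dom := (hx 0).1
    intro hP
    have hRel : (x, m.toFun x) ∈ R := word_inner hΦ.1 hR.2.1 hword x hxdom
    obtain ⟨m', k', hword', hxdom', heq⟩ := hP (m.toFun x) hRel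
    exact (hx k').2 ⟨hxdom, Set.mem_biUnion ⟨k', le_rfl, hword'⟩ ⟨hxdom', heq⟩⟩
  set ε : ℝ≥0∞ := (δ₀ / 2) / (hW.toFinset.card + 1) with hεdef
  have hεpos : 0 < ε := ENNReal.div_pos hhalfpos.ne' (by
    exact ENNReal.add_ne_top.mpr ⟨ENNReal.natCast_ne_top _, by norm_num⟩)
  have hcard0 : (hW.toFinset.card : ℝ≥0∞) + 1 ≠ 0 := (one_pos.trans_le le_add_self).ne'
  have hlim : ∀ m ∈ W, ∃ K, μ (m.dom \ S m K) ≤ ε := by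
    intro m hm
    have hmeas : ∀ K, MeasureTheory.NullMeasurableSet (m.dom \ S m K) μ := fun K =>
      (m.measurableSet_dom.diff (hSmeas m K)).nullMeasurableSet
    have hanti : Antitone (fun K => m.dom \ S m K) := fun K K' hKK' =>
      Set.diff_subset_diff_right (hSmono m hKK')
    have htend := MeasureTheory.tendsto_measure_iInter_atTop (μ := μ) hmeas hanti
      ⟨0, MeasureTheory.measure_ne_top μ _⟩
    have h0 : μ (⋂ K, (m.dom \ S m K)) = 0 :=
      le_antisymm ((MeasureTheory.measure_mono (hcap m hm)).trans hZ.le) bot_le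
    rw [h0] at htend
    obtain ⟨N, hN⟩ := ENNReal.tendsto_atTop_zero.mp htend ε hεpos
    exact ⟨N, hN N le_rfl⟩
  choose! K hK using hlim
  set N : Set X := ⋃ m ∈ hW.toFinset, (m.dom \ S m (K m)) with hNdef
  have hNmeas : MeasurableSet N :=
    hW.toFinset.measurableSet_biUnion fun m _ => m.measurableSet_dom.diff (hSmeas m (K m))
  have hNμ : μ N ≤ δ₀ / 2 := by
    calc μ N ≤ ∑ m ∈ hW.toFinset, μ (m.dom \ S m (K m)) :=
          MeasureTheory.measure_biUnion_finset_le _ _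
      _ ≤ ∑ _m ∈ hW.toFinset, ε := Finset.sum_le_sum fun m hm => hK m (hW.mem_toFinset.mp hm)
      _ = hW.toFinset.card * ε := by rw [Finset.sum_const, nsmul_eq_mul]
      _ ≤ (hW.toFinset.card + 1) * ε := by gcongr; exact le_self_add
      _ = δ₀ / 2 := ENNReal.mul_div_cancel hcard0 (ENNReal.add_ne_top.mpr
            ⟨ENNReal.natCast_ne_top _, by norm_num⟩)
  refine ⟨hW.toFinset.sup K, ?_⟩
  intro A B hA hB hμA hμB
  have hδ₀A : δ₀ ≤ μ A := (min_le_left δ 1).trans hμA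
  have h1 : δ₀ / 2 ≤ μ (A \ N) := by
    have hcov : μ A ≤ μ (A \ N) + μ N := by
      calc μ A ≤ μ ((A \ N) ∪ N) := MeasureTheory.measure_mono (by
            rw [Set.diff_union_self]; exact Set.subset_union_left)
        _ ≤ μ (A \ N) + μ N := MeasureTheory.measure_union_le _ _
    have : δ₀ / 2 + δ₀ / 2 ≤ μ (A \ N) + δ₀ / 2 := by
      rw [ENNReal.add_halves]
      exact hδ₀A.trans (hcov.trans (add_le_add le_rfl hNμ))
    exact (ENNReal.add_le_add_iff_right hhalftop).mp this
  have h2 : δ₀ / 2 ≤ μ B := (ENNReal.half_le_self).trans ((min_le_left δ 1).trans hμB)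
  have hT := hr (A \ N) B (hA.diff hNmeas) hB h1 h2
  refine hT.trans_le (MeasureTheory.measure_mono ?_)
  rintro x ⟨⟨hxA, hxN⟩, m, k, hword, hk, hxdom, hxB⟩
  have hmW : m ∈ W := ⟨k, hk, hword⟩
  have hxS : x ∈ S m (K m) := by
    by_contra h
    exact hxN (Set.mem_biUnion (hW.mem_toFinset.mpr hmW) ⟨hxdom, h⟩)
  obtain ⟨-, hxU⟩ := hxS
  obtain ⟨m', hxdom', hm'W, heq⟩ :
      ∃ m', x ∈ m'.dom ∧ m' ∈ WΨ (K m) ∧ m'.toFun x = m.toFun x := by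
    simpa using hxU
  obtain ⟨k', hk', hword'⟩ := hm'W
  exact ⟨hxA, m', k', hword', hk'.trans (Finset.le_sup (hW.mem_toFinset.mpr hmW)),
    hxdom', heq ▸ hxB⟩

/-- For an ergodic countable Borel equivalence relation with quasi-invariant
atomless probability measure, concentration does not depend on the chosen finite graphing. -/
theorem stmt3 {X : Type*} [MeasurableSpace X] [StandardBorelSpace X]
    (μ : Measure X) [IsProbabilityMeasure μ] [NullSingletonClass μ]
    (R : Set (X × X)) (hR : IsCountableBorelER R)
    (hqi : QuasiInvariant μ R) (herg : ErgodicRel μ R)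
    (Φ Ψ : Set (PartialIso X)) (hΦfin : Φ.Finite) (hΨfin : Ψ.Finite)
    (hΦ : IsGraphing Φ μ R) (hΨ : IsGraphing Ψ μ R) :
    Concentrated Φ μ ↔ Concentrated Ψ μ := by
  exact ⟨fun h => conc_mono μ R hR Φ Ψ hΦfin hΨfin hΦ hΨ h, fun h => conc_mono μ R hR Ψ Φ hΨfin hΦfin hΨ hΦ h⟩
end
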